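/- Let p : ℕ → [0,∞) with ∑_{s} p_s = 1 and λ := ∑_{s} s p_s ∈ (0,∞), for each s let (t_{s,ℓ})_{ℓ=0}^{s} be nonnegative reals with ∑_{ℓ=0}^{s} t_{s,ℓ} = 1, let α : ℕ → [0,1], and let π ∈ [0,1]. Define h(z) := ∑_{s=0}^∞ (1 − α_s) p_s ∑_{ℓ=0}^{s} t_{s,ℓ} ∑_{r=s−ℓ}^{s} r b_{s,r}(1 − π + π z) and g(z) := λ z (1 − π + π z) − h(z). Then g(0) ≤ 0 and g(1) = ∑_{s} s α_s p_s. If moreover there exists d ≥ 1 with α_d p_d > 0, then g(1) ≥ d α_d p_d > 0, the set Z := { z ∈ [0,1] : g(z) = 0 } is nonempty and has a greatest element ẑ, and ẑ < 1. -/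
import Mathlib


/-- Binomial probability `b_{s,r}(p) = (s choose r) p^r (1-p)^(s-r)`. -/
noncomputable def binomProb (s r : ℕ) (p : ℝ) : ℝ :=
  (s.choose r : ℝ) * p ^ r * (1 - p) ^ (s - r)

/-- `h(z) = ∑_s (1-α_s) p_s ∑_{ℓ=0}^s t_{s,ℓ} ∑_{r=s-ℓ}^s r b_{s,r}(1-π+πz)`. -/
noncomputable def hFun (p : ℕ → ℝ) (t : ℕ → ℕ → ℝ) (α : ℕ → ℝ) (π z : ℝ) : ℝ :=
  ∑' s : ℕ, (1 - α s) * p s * ∑ ℓ ∈ Finset.range (s + 1),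
    t s ℓ * ∑ r ∈ Finset.Icc (s - ℓ) s, (r : ℝ) * binomProb s r (1 - π + π * z)

/-- `g(z) = λ z (1-π+πz) - h(z)`. -/
noncomputable def gFun (p : ℕ → ℝ) (t : ℕ → ℕ → ℝ) (α : ℕ → ℝ) (π z : ℝ) : ℝ :=
  (∑' s : ℕ, (s : ℝ) * p s) * z * (1 - π + π * z) - hFun p t α π z

lemma binomProb_nonneg (s r : ℕ) {q : ℝ} (h0 : 0 ≤ q) (h1 : q ≤ 1) :
    0 ≤ binomProb s r q := by
  unfold binomProb
  have : (0:ℝ) ≤ 1 - q := by linarith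
  positivity

lemma binomProb_sum (s : ℕ) (q : ℝ) :
    ∑ r ∈ Finset.range (s + 1), binomProb s r q = 1 := by
  rw [show (1:ℝ) = (q + (1-q))^s by ring_nf, add_pow]
  unfold binomProb
  apply Finset.sum_congr rfl
  intro r hr; ring

lemma inner_bound (s ℓ : ℕ) {q : ℝ} (h0 : 0 ≤ q) (h1 : q ≤ 1) :
    ∑ r ∈ Finset.Icc (s - ℓ) s, (r : ℝ) * binomProb s r q ∈ Set.Icc 0 (s : ℝ) := by
  have hb : ∀ r, 0 ≤ binomProb s r q := fun r => binomProb_nonneg s r h0 h1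
  constructor
  · exact Finset.sum_nonneg fun r _ => mul_nonneg (Nat.cast_nonneg r) (hb r)
  · calc ∑ r ∈ Finset.Icc (s - ℓ) s, (r : ℝ) * binomProb s r q
        ≤ ∑ r ∈ Finset.range (s + 1), (r : ℝ) * binomProb s r q := by
          apply Finset.sum_le_sum_of_subset_of_nonneg
          · intro r hr
            simp only [Finset.mem_Icc] at hr
            simp [Finset.mem_range, Nat.lt_succ_iff, hr.2]
          · intro r _ _; exact mul_nonneg (Nat.cast_nonneg r) (hb r)
    _ ≤ ∑ r ∈ Finset.range (s + 1), (s : ℝ) * binomProb s r q := by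
          apply Finset.sum_le_sum
          intro r hr
          have : (r:ℝ) ≤ s := by
            simp only [Finset.mem_range, Nat.lt_succ_iff] at hr
            exact_mod_cast hr
          exact mul_le_mul_of_nonneg_right this (hb r)
    _ = (s : ℝ) := by rw [← Finset.mul_sum, binomProb_sum, mul_one]

lemma inner_at_one (s ℓ : ℕ) :
    ∑ r ∈ Finset.Icc (s - ℓ) s, (r : ℝ) * binomProb s r 1 = s := by
  rw [Finset.sum_eq_single_of_mem s (by simp [Finset.mem_Icc, Nat.sub_le])]
  · simp [binomProb]
  · intro r hr hne
    simp only [Finset.mem_Icc] at hr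
    have hlt : r < s := lt_of_le_of_ne hr.2 hne
    have : s - r ≠ 0 := Nat.sub_ne_zero_of_lt hlt
    simp [binomProb, zero_pow this]

theorem stmt14 (p : ℕ → ℝ) (hp : ∀ s, 0 ≤ p s) (hpsum : Summable p)
    (hp1 : ∑' s : ℕ, p s = 1)
    (hsum : Summable fun s : ℕ => (s : ℝ) * p s)
    (hlampos : 0 < ∑' s : ℕ, (s : ℝ) * p s)
    (t : ℕ → ℕ → ℝ) (ht : ∀ s ℓ, 0 ≤ t s ℓ)
    (ht1 : ∀ s, ∑ ℓ ∈ Finset.range (s + 1), t s ℓ = 1)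
    (α : ℕ → ℝ) (hα : ∀ s, α s ∈ Set.Icc (0:ℝ) 1)
    (π : ℝ) (hπ : π ∈ Set.Icc (0:ℝ) 1) :
    gFun p t α π 0 ≤ 0 ∧
    gFun p t α π 1 = ∑' s : ℕ, (s : ℝ) * α s * p s ∧
    ∀ d : ℕ, 1 ≤ d → 0 < α d * p d →
      (d : ℝ) * α d * p d ≤ gFun p t α π 1 ∧
      0 < gFun p t α π 1 ∧
      ∃ zhat ∈ {z ∈ Set.Icc (0:ℝ) 1 | gFun p t α π z = 0},
        zhat < 1 ∧ ∀ z ∈ {z ∈ Set.Icc (0:ℝ) 1 | gFun p t α π z = 0}, z ≤ zhat := by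
  obtain ⟨hπ0, hπ1⟩ := hπ
  set f : ℕ → ℝ → ℝ := fun s z => (1 - α s) * p s * ∑ ℓ ∈ Finset.range (s + 1),
    t s ℓ * ∑ r ∈ Finset.Icc (s - ℓ) s, (r : ℝ) * binomProb s r (1 - π + π * z) with hf
  have hq : ∀ z ∈ Set.Icc (0:ℝ) 1, 0 ≤ 1 - π + π * z ∧ 1 - π + π * z ≤ 1 := by
    intro z hz
    obtain ⟨hz0, hz1⟩ := hz
    constructor <;> nlinarith
  -- bound on f
  have hfb : ∀ s : ℕ, ∀ z ∈ Set.Icc (0:ℝ) 1, 0 ≤ f s z ∧ f s z ≤ (s : ℝ) * p s := by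
    intro s z hz
    obtain ⟨hq0, hq1⟩ := hq z hz
    have hB : ∀ ℓ, ∑ r ∈ Finset.Icc (s - ℓ) s, (r : ℝ) * binomProb s r (1 - π + π * z)
        ∈ Set.Icc 0 (s:ℝ) := fun ℓ => inner_bound s ℓ hq0 hq1
    have hmid0 : 0 ≤ ∑ ℓ ∈ Finset.range (s + 1),
        t s ℓ * ∑ r ∈ Finset.Icc (s - ℓ) s, (r : ℝ) * binomProb s r (1 - π + π * z) :=
      Finset.sum_nonneg fun ℓ _ => mul_nonneg (ht s ℓ) (hB ℓ).1
    have hmid1 : ∑ ℓ ∈ Finset.range (s + 1),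
        t s ℓ * ∑ r ∈ Finset.Icc (s - ℓ) s, (r : ℝ) * binomProb s r (1 - π + π * z)
        ≤ (s : ℝ) := by
      calc _ ≤ ∑ ℓ ∈ Finset.range (s + 1), t s ℓ * (s : ℝ) :=
            Finset.sum_le_sum fun ℓ _ => mul_le_mul_of_nonneg_left (hB ℓ).2 (ht s ℓ)
        _ = (s : ℝ) := by rw [← Finset.sum_mul, ht1, one_mul]
    have hA0 : 0 ≤ (1 - α s) * p s := mul_nonneg (by linarith [(hα s).2]) (hp s)
    have hA1 : (1 - α s) * p s ≤ p s := by nlinarith [(hα s).1, hp s]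
    refine ⟨mul_nonneg hA0 hmid0, ?_⟩
    calc f s z ≤ p s * (s : ℝ) := mul_le_mul hA1 hmid1 hmid0 (hp s)
      _ = (s : ℝ) * p s := mul_comm _ _
  have hsummf : ∀ z ∈ Set.Icc (0:ℝ) 1, Summable (fun s => f s z) := fun z hz =>
    Summable.of_nonneg_of_le (fun s => (hfb s z hz).1) (fun s => (hfb s z hz).2) hsum
  have hhz : ∀ z, hFun p t α π z = ∑' s, f s z := fun z => rfl
  -- g(0) ≤ 0
  have hg0 : gFun p t α π 0 ≤ 0 := by
    have h0 : 0 ≤ hFun p t α π 0 := by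
      rw [hhz]
      exact tsum_nonneg fun s => (hfb s 0 ⟨le_refl _, zero_le_one⟩).1
    unfold gFun
    simp only [mul_zero, zero_mul]
    linarith
  -- h(1)
  have hS1 : Summable (fun s : ℕ => (1 - α s) * p s * (s : ℝ)) := by
    apply Summable.of_nonneg_of_le (fun s =>
      mul_nonneg (mul_nonneg (by linarith [(hα s).2]) (hp s)) (Nat.cast_nonneg s))
      (fun s => ?_) hsum
    have h1 : (1 - α s) * p s ≤ p s := by nlinarith [(hα s).1, hp s]
    calc (1 - α s) * p s * (s : ℝ) ≤ p s * (s : ℝ) :=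
          mul_le_mul_of_nonneg_right h1 (Nat.cast_nonneg s)
      _ = (s : ℝ) * p s := mul_comm _ _
  have hh1 : hFun p t α π 1 = ∑' s : ℕ, (1 - α s) * p s * (s : ℝ) := by
    rw [hhz]
    apply tsum_congr
    intro s
    simp only [hf]
    congr 1
    calc ∑ ℓ ∈ Finset.range (s + 1),
        t s ℓ * ∑ r ∈ Finset.Icc (s - ℓ) s, (r : ℝ) * binomProb s r (1 - π + π * 1)
        = ∑ ℓ ∈ Finset.range (s + 1), t s ℓ * (s : ℝ) := by
          apply Finset.sum_congr rfl
          intro ℓ _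
          rw [show (1 - π + π * 1 : ℝ) = 1 by ring, inner_at_one]
      _ = (s : ℝ) := by rw [← Finset.sum_mul, ht1, one_mul]
  have hSα : Summable (fun s : ℕ => (s : ℝ) * α s * p s) := by
    apply Summable.of_nonneg_of_le (fun s =>
      mul_nonneg (mul_nonneg (Nat.cast_nonneg s) (hα s).1) (hp s))
      (fun s => ?_) hsum
    have h1 : (s : ℝ) * α s ≤ (s : ℝ) := by
      nlinarith [(hα s).2, Nat.cast_nonneg (α := ℝ) s]
    exact mul_le_mul_of_nonneg_right h1 (hp s)
  have hg1 : gFun p t α π 1 = ∑' s : ℕ, (s : ℝ) * α s * p s := by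
    unfold gFun
    rw [hh1]
    have := Summable.tsum_sub hsum hS1
    rw [show (1 - π + π * 1 : ℝ) = 1 by ring, mul_one, mul_one]
    rw [← this]
    apply tsum_congr
    intro s; ring
  refine ⟨hg0, hg1, ?_⟩
  intro d hd hdp
  have hterm : 0 < (d : ℝ) * α d * p d := by
    have : (1:ℝ) ≤ (d:ℝ) := by exact_mod_cast hd
    nlinarith
  have hle : (d : ℝ) * α d * p d ≤ gFun p t α π 1 := by
    rw [hg1]
    apply Summable.le_tsum hSα d
    intro j _
    have := (hα j).1; have := (hα j).2; have := hp j
    positivity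
  have hg1pos : 0 < gFun p t α π 1 := lt_of_lt_of_le hterm hle
  refine ⟨hle, hg1pos, ?_⟩
  -- continuity
  have hcf : ∀ s : ℕ, Continuous (f s) := by
    intro s
    apply Continuous.mul continuous_const
    apply continuous_finset_sum
    intro ℓ _
    apply Continuous.mul continuous_const
    apply continuous_finset_sum
    intro r _
    unfold binomProb
    fun_prop
  have hch : ContinuousOn (fun z => hFun p t α π z) (Set.Icc (0:ℝ) 1) := by
    simp only [hhz]
    apply continuousOn_tsum (fun s => (hcf s).continuousOn) hsum
    intro s z hz
    rw [Real.norm_eq_abs, abs_of_nonneg (hfb s z hz).1]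
    exact (hfb s z hz).2
  have hcg : ContinuousOn (gFun p t α π) (Set.Icc (0:ℝ) 1) := by
    have : gFun p t α π = fun z =>
        (∑' s : ℕ, (s : ℝ) * p s) * z * (1 - π + π * z) - hFun p t α π z := rfl
    rw [this]
    exact ContinuousOn.sub (Continuous.continuousOn (by fun_prop)) hch
  -- IVT
  have hmem0 : (0:ℝ) ∈ Set.Icc (gFun p t α π 0) (gFun p t α π 1) := ⟨hg0, le_of_lt hg1pos⟩
  obtain ⟨z0, hz0mem, hz0⟩ := intermediate_value_Icc zero_le_one hcg hmem0
  -- compactness, greatest element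
  set Z : Set ℝ := {z ∈ Set.Icc (0:ℝ) 1 | gFun p t α π z = 0} with hZ
  have hZeq : Z = Set.Icc (0:ℝ) 1 ∩ gFun p t α π ⁻¹' {0} := by
    ext z; simp [hZ, Set.mem_sep_iff]
  have hZclosed : IsClosed Z := by
    rw [hZeq]
    exact hcg.preimage_isClosed_of_isClosed isClosed_Icc isClosed_singleton
  have hZcompact : IsCompact Z := IsCompact.of_isClosed_subset isCompact_Icc hZclosed
    (fun z hz => hz.1)
  have hZne : Z.Nonempty := ⟨z0, hz0mem, hz0⟩
  obtain ⟨zhat, hzhatmem, hzhatub⟩ := hZcompact.exists_isGreatest hZne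
  refine ⟨zhat, hzhatmem, ?_, hzhatub⟩
  rcases lt_or_eq_of_le hzhatmem.1.2 with h | h
  · exact h
  · exfalso
    have := hzhatmem.2
    rw [h] at this
    linarith
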